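/- For every fixed y ∈ Y, the map x ↦ η(y, x) P_y(x) is globally Lipschitz on K̄. -/

import Mathlib

open Filter Topology MeasureTheory Set Metric Bornology RealInnerProductSpace
open scoped ENNReal NNReal

noncomputable section

namespace Bif

abbrev Xs (d : ℕ) : Type := EuclideanSpace ℝ (Fin d)
abbrev Ys (m : ℕ) : Type := EuclideanSpace ℝ (Fin m)
abbrev Zs (m d : ℕ) : Type := WithLp 2 (Ys m × Xs d)

variable {d m n : ℕ}

/-- The point `(y, x)` in `Y × ℝ^d` equipped with the product Euclidean (ℓ²) norm. -/
def ptYX (y : Ys m) (x : Xs d) : Zs m d := (WithLp.equiv 2 (Ys m × Xs d)).symm (y, x)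

def projY (p : Zs m d) : Ys m := ((WithLp.equiv 2 (Ys m × Xs d)) p).1

def projX (p : Zs m d) : Xs d := ((WithLp.equiv 2 (Ys m × Xs d)) p).2

/-- `f` is locally Lipschitz on `s`: every point of `s` has a relative
neighborhood on which `f` is Lipschitz. -/
def LocLipOn {α β : Type*} [PseudoEMetricSpace α] [PseudoEMetricSpace β]
    (s : Set α) (f : α → β) : Prop :=
  ∀ x ∈ s, ∃ C : NNReal, ∃ t ∈ 𝓝[s] x, LipschitzOnWith C f t

/-- The solution set `F(x) = {f_1(x), …, f_n(x)}`. -/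
def Fset (f : Fin n → Xs d → Ys m) (x : Xs d) : Set (Ys m) :=
  Set.range fun i => f i x

/-- The reduced Voronoi switching set `Σ°(x)`. -/
def Sigma0 (f : Fin n → Xs d → Ys m) (x : Xs d) : Set (Ys m) :=
  {y | ∃ i j : Fin n, f i x ≠ f j x ∧ ‖y - f i x‖ = ‖y - f j x‖ ∧
        ∀ k, ‖y - f i x‖ ≤ ‖y - f k x‖}

/-- The graph-closure switching set `Σ̃(x₀)`: the graph of `Σ̃` is the closure of
the graph of `Σ°` (over base points in `K`). -/
def SigmaTilde (K : Set (Xs d)) (f : Fin n → Xs d → Ys m) (x0 : Xs d) : Set (Ys m) :=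
  {y | (x0, y) ∈ closure {p : Xs d × Ys m | p.1 ∈ K ∧ p.2 ∈ Sigma0 f p.1}}

/-- `x₀` has a stable collapse pattern: on a relative neighborhood `U ⊆ K` of `x₀`
there is a partition (equivalence relation) of the branch indices such that two
branches agree at a point of `U` iff they lie in the same cluster. -/
def StableAt (K : Set (Xs d)) (f : Fin n → Xs d → Ys m) (x0 : Xs d) : Prop :=
  ∃ U ∈ 𝓝[K] x0, U ⊆ K ∧ ∃ R : Fin n → Fin n → Prop, Equivalence R ∧
    ∀ x ∈ U, ∀ i j : Fin n, (f i x = f j x ↔ R i j)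

/-- The unstable collapse set `𝒰 = K \ S`. -/
def Unstable (K : Set (Xs d)) (f : Fin n → Xs d → Ys m) : Set (Xs d) :=
  {x ∈ K | ¬ StableAt K f x}

/-- `P` is the priority nearest selector: `P y x = f i x` where `i` is the
smallest index minimizing `‖y - f i x‖`. -/
def IsPrioritySelector (f : Fin n → Xs d → Ys m) (P : Ys m → Xs d → Ys m) : Prop :=
  ∀ (y : Ys m) (x : Xs d), ∃ i : Fin n, P y x = f i x ∧
    (∀ j, ‖y - f i x‖ ≤ ‖y - f j x‖) ∧
    (∀ j, (∀ k, ‖y - f j x‖ ≤ ‖y - f k x‖) → i ≤ j)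

/-- On `closure K \ K`, `f` takes the value of the limit of `f` along `K` when this
limit exists, and `0` otherwise (limit-or-zero extension of the branch maps). -/
def IsLimitExtension (K : Set (Xs d)) (f : Fin n → Xs d → Ys m) : Prop :=
  ∀ i : Fin n, ∀ x ∈ closure K \ K,
    Tendsto (f i) (𝓝[K] x) (𝓝 (f i x)) ∨
    ((¬ ∃ L : Ys m, Tendsto (f i) (𝓝[K] x) (𝓝 L)) ∧ f i x = 0)

/-- `𝒟`: the points of `closure K` at which some (extended) branch fails to be
locally Lipschitz. -/
def DSet (K : Set (Xs d)) (f : Fin n → Xs d → Ys m) : Set (Xs d) :=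
  {x ∈ closure K | ∃ i : Fin n,
    ¬ ∃ C : NNReal, ∃ t ∈ 𝓝[closure K] x, LipschitzOnWith C (f i) t}

/-- The joint bad set `ℬ ⊆ Y × closure K`. -/
def BadSet (K : Set (Xs d)) (f : Fin n → Xs d → Ys m) : Set (Zs m d) :=
  {p | projX p ∈ DSet K f ∪ closure (Unstable K f) ∨ projY p ∈ SigmaTilde K f (projX p)}

/-- `ρ(y, x) = dist((y, x), ℬ)` in the product Euclidean norm. -/
def rhoB (K : Set (Xs d)) (f : Fin n → Xs d → Ys m) (y : Ys m) (x : Xs d) : ℝ :=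
  Metric.infDist (ptYX y x) (BadSet K f)

/-- `ω(y, x) = ρ(y, x) / (1 + ρ(y, x))`. -/
def omegaB (K : Set (Xs d)) (f : Fin n → Xs d → Ys m) (y : Ys m) (x : Xs d) : ℝ :=
  rhoB K f y x / (1 + rhoB K f y x)

/-- The safe tube `𝒮(R, s)`. -/
def STube (K : Set (Xs d)) (f : Fin n → Xs d → Ys m) (R s : ℝ) : Set (Ys m × Xs d) :=
  {q | q.2 ∈ closure K ∧ ‖q.1‖ ≤ R ∧ s ≤ omegaB K f q.1 q.2}

/-- The set whose supremum is the safe-set profile `H₁(R, s)`. -/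
def H1set (K : Set (Xs d)) (f : Fin n → Xs d → Ys m) (P : Ys m → Xs d → Ys m)
    (R s : ℝ) : Set ℝ :=
  {r | ∃ y x z, (y, x) ∈ STube K f R s ∧ (y, z) ∈ STube K f R s ∧ x ≠ z ∧
       r = ‖P y x - P y z‖ / ‖x - z‖}

/-- The set whose supremum is the safe-set profile `H₂(R, s)`. -/
def H2set (K : Set (Xs d)) (f : Fin n → Xs d → Ys m) (P : Ys m → Xs d → Ys m)
    (R s : ℝ) : Set ℝ :=
  {r | ∃ y x, (y, x) ∈ STube K f R s ∧ r = ‖P y x‖}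

def H1 (K : Set (Xs d)) (f : Fin n → Xs d → Ys m) (P : Ys m → Xs d → Ys m) (R s : ℝ) : ℝ :=
  sSup (H1set K f P R s)

def H2 (K : Set (Xs d)) (f : Fin n → Xs d → Ys m) (P : Ys m → Xs d → Ys m) (R s : ℝ) : ℝ :=
  sSup (H2set K f P R s)

/-- `λ_R(s) = 1 / (H₁(R, s) + H₂(R, s) + 1)`. -/
def lamB (K : Set (Xs d)) (f : Fin n → Xs d → Ys m) (P : Ys m → Xs d → Ys m)
    (R s : ℝ) : ℝ :=
  1 / (H1 K f P R s + H2 K f P R s + 1)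

/-- `Θ_R(r) = ∫₀^r λ_R(s) ds`. -/
def ThetaB (K : Set (Xs d)) (f : Fin n → Xs d → Ys m) (P : Ys m → Xs d → Ys m)
    (R r : ℝ) : ℝ :=
  ∫ s in (0:ℝ)..r, lamB K f P R s

/-- The damping factor `η(y, x)`. -/
def etaB (K : Set (Xs d)) (f : Fin n → Xs d → Ys m) (P : Ys m → Xs d → Ys m)
    (y : Ys m) (x : Xs d) : ℝ :=
  ThetaB K f P (1 + ‖y‖) (omegaB K f y x) /
    (1 + ThetaB K f P (1 + ‖y‖) (omegaB K f y x))

/-- The recurrent operator `g(y, x) = (1 − η(y, x)) y + η(y, x) P_y(x)`. -/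
def gB (K : Set (Xs d)) (f : Fin n → Xs d → Ys m) (P : Ys m → Xs d → Ys m)
    (y : Ys m) (x : Xs d) : Ys m :=
  (1 - etaB K f P y x) • y + etaB K f P y x • P y x

section Aux

variable {d m n : ℕ}

@[simp] lemma projY_ptYX (y : Ys m) (x : Xs d) : projY (ptYX y x) = y := rfl

@[simp] lemma projX_ptYX (y : Ys m) (x : Xs d) : projX (ptYX y x) = x := rfl

lemma dist_ptYX (y y' : Ys m) (x x' : Xs d) :
    dist (ptYX y x) (ptYX y' x') = Real.sqrt (dist y y' ^ 2 + dist x x' ^ 2) := by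
  rw [WithLp.prod_dist_eq_of_L2]
  rfl

lemma dist_ptYX_same (y : Ys m) (x x' : Xs d) :
    dist (ptYX y x) (ptYX y x') = dist x x' := by
  rw [dist_ptYX]
  simp [Real.sqrt_sq dist_nonneg]

lemma dist_ptYX_le (y y' : Ys m) (x x' : Xs d) :
    dist (ptYX y x) (ptYX y' x') ≤ dist y y' + dist x x' := by
  rw [dist_ptYX]
  have h1 : dist y y' ^ 2 + dist x x' ^ 2 ≤ (dist y y' + dist x x') ^ 2 := by
    nlinarith [dist_nonneg (x := y) (y := y'), dist_nonneg (x := x) (y := x')]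
  calc Real.sqrt (dist y y' ^ 2 + dist x x' ^ 2) ≤ Real.sqrt ((dist y y' + dist x x') ^ 2) :=
        Real.sqrt_le_sqrt h1
    _ = dist y y' + dist x x' := Real.sqrt_sq (by positivity)

variable (K : Set (Xs d)) (f : Fin n → Xs d → Ys m) (P : Ys m → Xs d → Ys m)

lemma rhoB_nonneg (y : Ys m) (x : Xs d) : 0 ≤ rhoB K f y x :=
  Metric.infDist_nonneg

lemma rhoB_le_dist_D (y : Ys m) (x : Xs d) {u : Xs d} (hu : u ∈ DSet K f) :
    rhoB K f y x ≤ dist x u := by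
  have hmem : ptYX y u ∈ BadSet K f := Or.inl (by simp [Set.mem_union]; exact Or.inl hu)
  calc rhoB K f y x ≤ dist (ptYX y x) (ptYX y u) := Metric.infDist_le_dist_of_mem hmem
    _ = dist x u := dist_ptYX_same y x u

lemma rhoB_le_sigma (y : Ys m) (x : Xs d) {σ : Ys m} {w : Xs d}
    (hw : w ∈ K) (hσ : σ ∈ Sigma0 f w) :
    rhoB K f y x ≤ dist y σ + dist x w := by
  have hmem : ptYX σ w ∈ BadSet K f := by
    refine Or.inr ?_
    show (w, σ) ∈ closure {p : Xs d × Ys m | p.1 ∈ K ∧ p.2 ∈ Sigma0 f p.1}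
    exact subset_closure ⟨hw, hσ⟩
  calc rhoB K f y x ≤ dist (ptYX y x) (ptYX σ w) := Metric.infDist_le_dist_of_mem hmem
    _ ≤ dist y σ + dist x w := dist_ptYX_le y σ x w

lemma rhoB_sub_le (y : Ys m) (x z : Xs d) :
    rhoB K f y x ≤ rhoB K f y z + dist x z := by
  have h := Metric.infDist_le_infDist_add_dist
    (x := ptYX y x) (y := ptYX y z) (s := BadSet K f)
  rwa [dist_ptYX_same] at h

lemma omegaB_nonneg (y : Ys m) (x : Xs d) : 0 ≤ omegaB K f y x := by
  have := rhoB_nonneg K f y x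
  unfold omegaB
  positivity

lemma omegaB_lt_one (y : Ys m) (x : Xs d) : omegaB K f y x < 1 := by
  have := rhoB_nonneg K f y x
  unfold omegaB
  rw [div_lt_one (by linarith)]
  linarith

lemma omegaB_sub_le (y : Ys m) (x z : Xs d) :
    omegaB K f y x - omegaB K f y z ≤ dist x z := by
  have h1 := rhoB_sub_le K f y x z
  have h2 := rhoB_nonneg K f y x
  have h3 := rhoB_nonneg K f y z
  have h4 : (0:ℝ) ≤ dist x z := dist_nonneg
  unfold omegaB
  set a := rhoB K f y x
  set b := rhoB K f y z
  have hb1 : (0:ℝ) < 1 + b := by linarith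
  have ha1 : (0:ℝ) < 1 + a := by linarith
  rw [div_sub_div _ _ ha1.ne' hb1.ne', div_le_iff₀ (by positivity)]
  nlinarith [mul_nonneg h4 h2, mul_nonneg h4 h3, mul_nonneg (mul_nonneg h4 h2) h3]

lemma rhoB_of_tube {R s : ℝ} {y : Ys m} {x : Xs d} (hs : 0 < s)
    (h : (y, x) ∈ STube K f R s) : s ≤ rhoB K f y x := by
  have hω : s ≤ omegaB K f y x := h.2.2
  have h0 := rhoB_nonneg K f y x
  unfold omegaB at hω
  rw [le_div_iff₀ (by linarith)] at hω
  nlinarith [mul_nonneg hs.le h0]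

end Aux
section Aux2

variable {d m n : ℕ} (K : Set (Xs d)) (f : Fin n → Xs d → Ys m) (P : Ys m → Xs d → Ys m)

lemma uniformA (hK : IsBounded K) {δ : ℝ} (hδ : 0 < δ) :
    ∃ C₀ M₀ : ℝ, 0 ≤ C₀ ∧ 0 ≤ M₀ ∧
      ∀ i : Fin n, ∀ x z : Xs d, x ∈ closure K → z ∈ closure K →
        (∀ u ∈ DSet K f, δ ≤ dist x u) → (∀ u ∈ DSet K f, δ ≤ dist z u) →
        ‖f i x‖ ≤ M₀ ∧ ‖f i x - f i z‖ ≤ C₀ * ‖x - z‖ := by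
  classical
  set G : Set (Xs d) := {x | x ∈ closure K ∧ ∀ u ∈ DSet K f, δ ≤ dist x u} with hG
  have hGsub : G ⊆ closure K := fun x hx => hx.1
  have hGclosed : IsClosed G := by
    have hGeq : G = closure K ∩ ⋂ u ∈ DSet K f, {x : Xs d | δ ≤ dist x u} := by
      ext x
      simp only [hG, Set.mem_setOf_eq, Set.mem_inter_iff, Set.mem_iInter]
    rw [hGeq]
    refine isClosed_closure.inter (isClosed_biInter fun u _ => ?_)
    exact isClosed_le continuous_const (continuous_id.dist continuous_const)
  have hGcomp : IsCompact G := by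
    refine IsCompact.of_isClosed_subset ?_ hGclosed hGsub
    exact Metric.isCompact_of_isClosed_isBounded isClosed_closure hK.closure
  have key : ∀ p ∈ G, ∃ ε : ℝ, 0 < ε ∧ ∃ C M : ℝ, 0 ≤ C ∧ 0 ≤ M ∧
      ∀ i : Fin n, ∀ x ∈ Metric.ball p ε ∩ closure K,
        ‖f i x‖ ≤ M ∧ ∀ z ∈ Metric.ball p ε ∩ closure K,
          ‖f i x - f i z‖ ≤ C * ‖x - z‖ := by
    intro p hp
    have hpD : p ∉ DSet K f := by
      intro hmem
      have := hp.2 p hmem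
      simp only [dist_self] at this
      linarith
    have hplip : ∀ i : Fin n, ∃ C : NNReal, ∃ t ∈ 𝓝[closure K] p,
        LipschitzOnWith C (f i) t := by
      intro i
      by_contra hcon
      exact hpD ⟨hp.1, i, hcon⟩
    choose Ci ti hti hlip using hplip
    have htmem : (⋂ i, ti i) ∈ 𝓝[closure K] p := Filter.iInter_mem.2 hti
    rw [Metric.mem_nhdsWithin_iff] at htmem
    obtain ⟨ε, hε, hsub⟩ := htmem
    set C : NNReal := Finset.univ.sup Ci with hC
    set M0 : NNReal := Finset.univ.sup (fun i => ‖f i p‖₊) with hM0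
    have hmemt : ∀ x ∈ Metric.ball p ε ∩ closure K, ∀ i, x ∈ ti i := by
      intro x hx i
      exact Set.mem_iInter.1 (hsub hx) i
    have hpmem : p ∈ Metric.ball p ε ∩ closure K := ⟨Metric.mem_ball_self hε, hp.1⟩
    have hlip' : ∀ i : Fin n, ∀ x ∈ Metric.ball p ε ∩ closure K,
        ∀ z ∈ Metric.ball p ε ∩ closure K, ‖f i x - f i z‖ ≤ (C : ℝ) * ‖x - z‖ := by
      intro i x hx z hz
      have h1 := (hlip i).dist_le_mul x (hmemt x hx i) z (hmemt z hz i)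
      rw [dist_eq_norm, dist_eq_norm] at h1
      have h2 : ((Ci i : NNReal) : ℝ) ≤ (C : ℝ) := by
        exact_mod_cast Finset.le_sup (f := Ci) (Finset.mem_univ i)
      calc ‖f i x - f i z‖ ≤ (Ci i : ℝ) * ‖x - z‖ := h1
        _ ≤ (C : ℝ) * ‖x - z‖ := mul_le_mul_of_nonneg_right h2 (norm_nonneg _)
    refine ⟨ε, hε, C, (C : ℝ) * ε + (M0 : ℝ), C.coe_nonneg, by positivity, ?_⟩
    intro i x hx
    constructor
    · have h1 : ‖f i x - f i p‖ ≤ (C : ℝ) * ‖x - p‖ := hlip' i x hx p hpmem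
      have h2 : ‖x - p‖ ≤ ε := by
        have := hx.1
        rw [Metric.mem_ball, dist_eq_norm] at this
        linarith
      have h3 : ‖f i p‖ ≤ (M0 : ℝ) := by
        have := Finset.le_sup (f := fun i => ‖f i p‖₊) (Finset.mem_univ i)
        exact_mod_cast this
      calc ‖f i x‖ ≤ ‖f i x - f i p‖ + ‖f i p‖ := by
            simpa using norm_add_le (f i x - f i p) (f i p)
        _ ≤ (C : ℝ) * ε + (M0 : ℝ) := by
            have := mul_le_mul_of_nonneg_left h2 C.coe_nonneg
            linarith
    · exact fun z hz => hlip' i x hx z hz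
  choose! ε hε C M hC hM hloc using key
  rcases G.eq_empty_or_nonempty with hGe | hGne
  · refine ⟨0, 0, le_rfl, le_rfl, fun i x z hx hz hxD hzD => ?_⟩
    have : x ∈ G := ⟨hx, hxD⟩
    rw [hGe] at this
    exact this.elim
  · obtain ⟨T, hT1, hT2⟩ := hGcomp.elim_nhds_subcover (fun p => Metric.ball p (ε p / 2))
      (fun p hp => Metric.ball_mem_nhds p (by linarith [hε p hp]))
    have hTne : T.Nonempty := by
      obtain ⟨q, hq⟩ := hGne
      obtain ⟨p, hp, -⟩ := Set.mem_iUnion₂.1 (hT2 hq)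
      exact ⟨p, hp⟩
    set r : ℝ := T.inf' hTne (fun p => ε p / 2) with hr
    have hrpos : 0 < r := by
      rw [hr, Finset.lt_inf'_iff]
      intro p hp
      linarith [hε p (hT1 p hp)]
    set Cm : ℝ := T.sup' hTne C with hCm
    set Mm : ℝ := T.sup' hTne M with hMm
    have hCm0 : 0 ≤ Cm := by
      obtain ⟨p, hp⟩ := hTne
      exact le_trans (hC p (hT1 p hp)) (Finset.le_sup' C hp)
    have hMm0 : 0 ≤ Mm := by
      obtain ⟨p, hp⟩ := hTne
      exact le_trans (hM p (hT1 p hp)) (Finset.le_sup' M hp)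
    -- membership helper
    have hmem : ∀ x : Xs d, x ∈ G → ∃ p ∈ T, x ∈ Metric.ball p (ε p / 2) := by
      intro x hx
      obtain ⟨p, hp, hxp⟩ := Set.mem_iUnion₂.1 (hT2 hx)
      exact ⟨p, hp, hxp⟩
    have hbound : ∀ i : Fin n, ∀ x : Xs d, x ∈ G → ‖f i x‖ ≤ Mm := by
      intro i x hx
      obtain ⟨p, hpT, hxp⟩ := hmem x hx
      have hpG := hT1 p hpT
      have hball : x ∈ Metric.ball p (ε p) ∩ closure K := by
        refine ⟨?_, hx.1⟩
        rw [Metric.mem_ball] at hxp ⊢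
        linarith [hε p hpG]
      exact le_trans ((hloc p hpG i x hball).1) (le_trans (le_refl _) (Finset.le_sup' M hpT))
    refine ⟨max Cm (2 * Mm / r), Mm, le_trans hCm0 (le_max_left _ _), hMm0, ?_⟩
    intro i x z hx hz hxD hzD
    have hxG : x ∈ G := ⟨hx, hxD⟩
    have hzG : z ∈ G := ⟨hz, hzD⟩
    refine ⟨hbound i x hxG, ?_⟩
    rcases le_or_gt ‖x - z‖ r with hle | hlt
    · obtain ⟨p, hpT, hxp⟩ := hmem x hxG
      have hpG := hT1 p hpT
      have hrep : r ≤ ε p / 2 := Finset.inf'_le _ hpT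
      have hxball : x ∈ Metric.ball p (ε p) ∩ closure K := by
        refine ⟨?_, hx⟩
        rw [Metric.mem_ball] at hxp ⊢
        linarith [hε p hpG]
      have hzball : z ∈ Metric.ball p (ε p) ∩ closure K := by
        refine ⟨?_, hz⟩
        rw [Metric.mem_ball] at hxp ⊢
        have h1 : dist z p ≤ dist z x + dist x p := dist_triangle z x p
        have h2 : dist z x ≤ r := by rw [dist_eq_norm, norm_sub_rev]; exact hle
        linarith
      calc ‖f i x - f i z‖ ≤ C p * ‖x - z‖ := (hloc p hpG i x hxball).2 z hzball
        _ ≤ Cm * ‖x - z‖ := mul_le_mul_of_nonneg_right (Finset.le_sup' C hpT) (norm_nonneg _)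
        _ ≤ max Cm (2 * Mm / r) * ‖x - z‖ :=
            mul_le_mul_of_nonneg_right (le_max_left _ _) (norm_nonneg _)
    · have h1 : ‖f i x - f i z‖ ≤ 2 * Mm := by
        calc ‖f i x - f i z‖ ≤ ‖f i x‖ + ‖f i z‖ := norm_sub_le _ _
          _ ≤ 2 * Mm := by linarith [hbound i x hxG, hbound i z hzG]
      have h2 : 2 * Mm ≤ (2 * Mm / r) * ‖x - z‖ := by
        rw [div_mul_eq_mul_div, le_div_iff₀ hrpos]
        have h3 := mul_le_mul_of_nonneg_left hlt.le (by linarith : (0:ℝ) ≤ 2 * Mm)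
        linarith
      calc ‖f i x - f i z‖ ≤ (2 * Mm / r) * ‖x - z‖ := by linarith
        _ ≤ max Cm (2 * Mm / r) * ‖x - z‖ :=
            mul_le_mul_of_nonneg_right (le_max_right _ _) (norm_nonneg _)

end Aux2
section Aux3

variable {d m n : ℕ}

lemma norm_shift {E : Type*} [SeminormedAddCommGroup E] (σ σ₀ c : E) :
    ‖σ - c‖ ≤ ‖σ₀ - c‖ + dist σ σ₀ := by
  have h := norm_add_le (σ₀ - c) (σ - σ₀)
  rw [show σ₀ - c + (σ - σ₀) = σ - c by abel] at h
  rw [dist_eq_norm]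
  linarith

lemma exists_dominant (hne : Nonempty (Fin n)) (val : Fin n → Ys m) (y : Ys m)
    {ε : ℝ} (hε : 0 < ε)
    (hNT : ∀ σ : Ys m, dist σ y < ε → ∀ a b : Fin n,
      (∀ k, ‖σ - val a‖ ≤ ‖σ - val k‖) → (∀ k, ‖σ - val b‖ ≤ ‖σ - val k‖) → val a = val b) :
    ∃ k₀ : Fin n, ∀ y' : Ys m, dist y' y < ε →
      (∀ k, ‖y' - val k₀‖ ≤ ‖y' - val k‖) ∧
      (∀ k, val k ≠ val k₀ → ‖y' - val k₀‖ < ‖y' - val k‖) := by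
  classical
  haveI := hne
  have stab : ∀ σ₀ : Ys m, dist σ₀ y < ε → ∀ a : Fin n,
      (∀ k, ‖σ₀ - val a‖ ≤ ‖σ₀ - val k‖) →
      ∃ r : ℝ, 0 < r ∧ ∀ σ : Ys m, dist σ σ₀ < r →
        dist σ y < ε ∧ ∀ k, ‖σ - val a‖ ≤ ‖σ - val k‖ := by
    intro σ₀ hσ₀ a ha
    have hstrict : ∀ k : Fin n, val k ≠ val a → ‖σ₀ - val a‖ < ‖σ₀ - val k‖ := by
      intro k hk
      rcases lt_or_eq_of_le (ha k) with h | h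
      · exact h
      · exact absurd (hNT σ₀ hσ₀ k a (fun k' => h ▸ ha k') ha) hk
    set T : Finset (Fin n) := Finset.univ.filter (fun k => val k ≠ val a) with hT
    by_cases hTe : T.Nonempty
    · set γ : ℝ := T.inf' hTe (fun k => ‖σ₀ - val k‖ - ‖σ₀ - val a‖) with hγdef
      have hγ : 0 < γ := by
        rw [hγdef, Finset.lt_inf'_iff]
        intro k hk
        linarith [hstrict k (Finset.mem_filter.1 hk).2]
      have hd : dist σ₀ y < ε := hσ₀
      refine ⟨min (γ / 2) (ε - dist σ₀ y), lt_min (by linarith) (by linarith), ?_⟩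
      intro σ hσ
      have hσ1 : dist σ σ₀ < γ / 2 := lt_of_lt_of_le hσ (min_le_left _ _)
      have hσ2 : dist σ σ₀ < ε - dist σ₀ y := lt_of_lt_of_le hσ (min_le_right _ _)
      have hσy : dist σ y < ε := by
        have := dist_triangle σ σ₀ y
        linarith
      refine ⟨hσy, fun k => ?_⟩
      by_cases hk : val k = val a
      · rw [hk]
      · have hkT : k ∈ T := Finset.mem_filter.2 ⟨Finset.mem_univ k, hk⟩
        have h1 : γ ≤ ‖σ₀ - val k‖ - ‖σ₀ - val a‖ := Finset.inf'_le _ hkT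
        have e1 := norm_shift σ σ₀ (val a)
        have e2 := norm_shift σ₀ σ (val k)
        rw [dist_comm] at e2
        linarith
    · refine ⟨ε - dist σ₀ y, by linarith, fun σ hσ => ?_⟩
      have hσy : dist σ y < ε := by
        have := dist_triangle σ σ₀ y
        linarith
      refine ⟨hσy, fun k => ?_⟩
      have hk : val k = val a := by
        by_contra hk
        exact hTe ⟨k, Finset.mem_filter.2 ⟨Finset.mem_univ k, hk⟩⟩
      rw [hk]
  obtain ⟨k₀, hk₀⟩ := Finite.exists_min (fun k => ‖y - val k‖)
  set A : Set (Ys m) := {σ | dist σ y < ε ∧ ∀ k, ‖σ - val k₀‖ ≤ ‖σ - val k‖} with hA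
  set B : Set (Ys m) :=
    {σ | dist σ y < ε ∧ ∃ a, (∀ k, ‖σ - val a‖ ≤ ‖σ - val k‖) ∧ val a ≠ val k₀} with hB
  have hAopen : IsOpen A := by
    rw [Metric.isOpen_iff]
    intro σ₀ hσ₀
    obtain ⟨r, hr, hball⟩ := stab σ₀ hσ₀.1 k₀ hσ₀.2
    exact ⟨r, hr, fun σ hσ => hball σ (Metric.mem_ball.1 hσ)⟩
  have hBopen : IsOpen B := by
    rw [Metric.isOpen_iff]
    intro σ₀ hσ₀
    obtain ⟨h1, a, ha, hane⟩ := hσ₀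
    obtain ⟨r, hr, hball⟩ := stab σ₀ h1 a ha
    refine ⟨r, hr, fun σ hσ => ?_⟩
    have h2 := hball σ (Metric.mem_ball.1 hσ)
    exact ⟨h2.1, a, h2.2, hane⟩
  have hdisj : Disjoint A B := by
    rw [Set.disjoint_left]
    rintro σ ⟨hσε, hmin⟩ ⟨-, a, ha, hane⟩
    exact hane (hNT σ hσε a k₀ ha hmin)
  have hcover : Metric.ball y ε ⊆ A ∪ B := by
    intro σ hσ
    have hσε : dist σ y < ε := Metric.mem_ball.1 hσ
    obtain ⟨a, ha⟩ := Finite.exists_min (fun k => ‖σ - val k‖)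
    by_cases hak : val a = val k₀
    · exact Or.inl ⟨hσε, fun k => by rw [← hak]; exact ha k⟩
    · exact Or.inr ⟨hσε, a, ha, hak⟩
  have hyA : y ∈ A := ⟨by simpa using hε, hk₀⟩
  have hsub : Metric.ball y ε ⊆ A :=
    IsPreconnected.subset_left_of_subset_union hAopen hBopen hdisj hcover
      ⟨y, Metric.mem_ball_self hε, hyA⟩ (convex_ball y ε).isPreconnected
  refine ⟨k₀, fun y' hy' => ?_⟩
  have hy'A : y' ∈ A := hsub (Metric.mem_ball.2 hy')
  refine ⟨hy'A.2, fun k hk => ?_⟩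
  rcases lt_or_eq_of_le (hy'A.2 k) with h | h
  · exact h
  · exact absurd (hNT y' hy'A.1 k k₀ (fun k' => h ▸ hy'A.2 k') hy'A.2) hk

end Aux3
section Aux4

variable {d m n : ℕ} (K : Set (Xs d)) (f : Fin n → Xs d → Ys m) (P : Ys m → Xs d → Ys m)

set_option maxHeartbeats 1000000 in
lemma selector_diff (hK : IsBounded K) (hP : IsPrioritySelector f P) {R s : ℝ} (hs : 0 < s) :
    ∃ C₁ : ℝ, 0 ≤ C₁ ∧ ∀ y x z, (y, x) ∈ STube K f R s → (y, z) ∈ STube K f R s →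
      ‖P y x - P y z‖ ≤ C₁ * ‖x - z‖ := by
  classical
  obtain ⟨C₀, M₀, hC₀, hM₀, hA⟩ := uniformA K f hK (show (0:ℝ) < s/2 by linarith)
  set Q : ℝ := |R| + M₀ with hQ
  have hQ0 : 0 ≤ Q := by positivity
  have hC₁0 : (0:ℝ) ≤ 3*C₀ + 24*C₀*Q/s := by positivity
  refine ⟨3*C₀ + 24*C₀*Q/s, hC₁0, ?_⟩
  intro y x z hx hz
  by_cases hxz : x = z
  · subst hxz
    simp only [sub_self, norm_zero, mul_zero]
    exact le_rfl
  have hd : (0:ℝ) < ‖x - z‖ := by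
    rw [norm_pos_iff, sub_ne_zero]
    exact hxz
  set dxz : ℝ := ‖x - z‖ with hdxz
  have hxcl : x ∈ closure K := hx.1
  have hzcl : z ∈ closure K := hz.1
  have hyR : ‖y‖ ≤ |R| := le_trans hx.2.1 (le_abs_self R)
  have hρz : s ≤ rhoB K f y z := rhoB_of_tube K f hs hz
  have hρx : s ≤ rhoB K f y x := rhoB_of_tube K f hs hx
  have hDx : ∀ u ∈ DSet K f, s/2 ≤ dist x u := fun u hu => by
    linarith [le_trans hρx (rhoB_le_dist_D K f y x hu)]
  have hDz : ∀ u ∈ DSet K f, s/2 ≤ dist z u := fun u hu => by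
    linarith [le_trans hρz (rhoB_le_dist_D K f y z hu)]
  obtain ⟨i, hPx, hmini, -⟩ := hP y x
  obtain ⟨j, hPz, hminj, -⟩ := hP y z
  set μ : ℝ := min dxz (s/4) with hμdef
  have hμ : 0 < μ := lt_min hd (by linarith)
  have hμd : μ ≤ dxz := min_le_left _ _
  have hμs : μ ≤ s/4 := min_le_right _ _
  obtain ⟨w, hwK, hwz⟩ := Metric.mem_closure_iff.1 hzcl μ hμ
  have hwcl : w ∈ closure K := subset_closure hwK
  have hDw : ∀ u ∈ DSet K f, s/2 ≤ dist w u := by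
    intro u hu
    have h1 := le_trans hρz (rhoB_le_dist_D K f y z hu)
    have h2 := dist_triangle z w u
    linarith
  have hzw : ‖z - w‖ ≤ μ := by
    rw [← dist_eq_norm]
    exact hwz.le
  have hbM : ∀ k : Fin n, ‖f k w‖ ≤ M₀ := fun k => (hA k w w hwcl hwcl hDw hDw).1
  have hLxz : ∀ k : Fin n, ‖f k x - f k z‖ ≤ C₀ * dxz := fun k =>
    (hA k x z hxcl hzcl hDx hDz).2
  have hLzw : ∀ k : Fin n, ‖f k z - f k w‖ ≤ C₀ * μ := fun k => by
    have h1 := (hA k z w hzcl hwcl hDz hDw).2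
    have h2 := mul_le_mul_of_nonneg_left hzw hC₀
    linarith
  have hLxw : ∀ k : Fin n, ‖f k x - f k w‖ ≤ C₀ * dxz + C₀ * μ := fun k => by
    have h1 := hLxz k
    have h2 := hLzw k
    have h3 : ‖f k x - f k w‖ ≤ ‖f k x - f k z‖ + ‖f k z - f k w‖ := by
      have := dist_triangle (f k x) (f k z) (f k w)
      simpa [dist_eq_norm] using this
    linarith
  have hNT : ∀ σ : Ys m, dist σ y < s/2 → ∀ a b : Fin n,
      (∀ k, ‖σ - f a w‖ ≤ ‖σ - f k w‖) → (∀ k, ‖σ - f b w‖ ≤ ‖σ - f k w‖) →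
      f a w = f b w := by
    intro σ hσ a b ha hb
    by_contra hab
    have hσS : σ ∈ Sigma0 f w := ⟨a, b, hab, le_antisymm (ha b) (hb a), ha⟩
    have h1 := rhoB_le_sigma K f y z hwK hσS
    rw [dist_comm] at hσ
    linarith
  obtain ⟨k₀, hdom⟩ := exists_dominant ⟨i⟩ (fun k => f k w) y
    (show (0:ℝ) < s/2 by linarith) hNT
  set v : Ys m := f k₀ w with hv
  have tri : ∀ a b : Ys m, ‖y - a‖ ≤ ‖y - b‖ + ‖b - a‖ := by
    intro a b
    have h := norm_add_le (y - b) (b - a)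
    rw [show y - b + (b - a) = y - a by abel] at h
    exact h
  have hminjw : ∀ k, ‖y - f j w‖ ≤ ‖y - f k w‖ + 2*(C₀*μ) := by
    intro k
    have t1 : ‖y - f j w‖ ≤ ‖y - f j z‖ + ‖f j z - f j w‖ := tri _ _
    have t2 : ‖y - f k z‖ ≤ ‖y - f k w‖ + ‖f k w - f k z‖ := tri _ _
    have t3 : ‖f k w - f k z‖ = ‖f k z - f k w‖ := norm_sub_rev _ _
    have t4 := hminj k
    linarith [hLzw j, hLzw k]
  have hminiw : ∀ k, ‖y - f i w‖ ≤ ‖y - f k w‖ + 2*(C₀*dxz + C₀*μ) := by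
    intro k
    have t1 : ‖y - f i w‖ ≤ ‖y - f i x‖ + ‖f i x - f i w‖ := tri _ _
    have t2 : ‖y - f k x‖ ≤ ‖y - f k w‖ + ‖f k w - f k x‖ := tri _ _
    have t3 : ‖f k w - f k x‖ = ‖f k x - f k w‖ := norm_sub_rev _ _
    have t4 := hmini k
    linarith [hLxw i, hLxw k]
  have gap : ∀ (kk : Fin n) (e : ℝ), 0 ≤ e →
      (∀ k, ‖y - f kk w‖ ≤ ‖y - f k w‖ + e) → ‖f kk w - v‖ * s ≤ 4 * Q * e := by
    intro kk e he hkk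
    by_cases hev : f kk w = v
    · rw [hev, sub_self, norm_zero, zero_mul]
      positivity
    · set c : Ys m := f kk w with hc
      have hcv : (0:ℝ) < ‖c - v‖ := by
        rw [norm_pos_iff, sub_ne_zero]
        exact hev
      set u : Ys m := ‖c - v‖⁻¹ • (c - v) with hu
      have hunorm : ‖u‖ = 1 := by
        rw [hu, norm_smul, norm_inv, norm_norm]
        field_simp
      set y' : Ys m := y + (s/4) • u with hy'
      have hy'dist : dist y' y < s/2 := by
        rw [hy', dist_eq_norm, add_sub_cancel_left, norm_smul, Real.norm_eq_abs, hunorm,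
          mul_one, abs_of_pos (by linarith : (0:ℝ) < s/4)]
        linarith
      have hstrict : ‖y' - v‖ < ‖y' - c‖ := (hdom y' hy'dist).2 kk hev
      have hexp : ∀ p : Ys m, ‖y' - p‖^2 = ‖y - p‖^2 + 2*(s/4)*⟪y - p, u⟫ + (s/4)^2 := by
        intro p
        rw [hy', show y + (s/4) • u - p = (y - p) + (s/4) • u by abel, norm_add_sq_real,
          real_inner_smul_right, norm_smul, Real.norm_eq_abs, hunorm, mul_one, sq_abs]
        ring
      have hiu : ⟪y - c, u⟫ - ⟪y - v, u⟫ = -‖c - v‖ := by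
        rw [← inner_sub_left, show y - c - (y - v) = -(c - v) by abel, hu,
          real_inner_smul_right, inner_neg_left, real_inner_self_eq_norm_sq]
        field_simp
      have hsq : ‖y' - v‖^2 < ‖y' - c‖^2 :=
        pow_lt_pow_left₀ hstrict (norm_nonneg _) (by norm_num)
      have h4 : ‖y' - c‖^2 - ‖y' - v‖^2 =
          ‖y - c‖^2 - ‖y - v‖^2 + 2*(s/4)*(⟪y - c, u⟫ - ⟪y - v, u⟫) := by
        rw [hexp c, hexp v]
        ring
      rw [hiu] at h4
      have hkey : 2*(s/4)*‖c - v‖ < ‖y - c‖^2 - ‖y - v‖^2 := by linarith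
      have hbc : ‖y - c‖ ≤ Q := by
        have h5 := norm_sub_le y c
        have h6 : ‖c‖ ≤ M₀ := by rw [hc]; exact hbM kk
        rw [hQ]
        linarith
      have hbv : ‖y - v‖ ≤ Q := by
        have h5 := norm_sub_le y v
        have h6 : ‖v‖ ≤ M₀ := by rw [hv]; exact hbM k₀
        rw [hQ]
        linarith
      have hdiff : ‖y - c‖ - ‖y - v‖ ≤ e := by
        have h7 := hkk k₀
        rw [← hv] at h7
        linarith
      have hsum0 : (0:ℝ) ≤ ‖y - c‖ + ‖y - v‖ := by positivity
      have hp1 : (‖y - c‖ - ‖y - v‖) * (‖y - c‖ + ‖y - v‖) ≤ e * (‖y - c‖ + ‖y - v‖) :=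
        mul_le_mul_of_nonneg_right hdiff hsum0
      have hp2 : e * (‖y - c‖ + ‖y - v‖) ≤ e * (2*Q) :=
        mul_le_mul_of_nonneg_left (by linarith) he
      have hfact : ‖y - c‖^2 - ‖y - v‖^2 = (‖y - c‖ - ‖y - v‖) * (‖y - c‖ + ‖y - v‖) := by
        ring
      linarith [hkey, hp1, hp2]
  have gapj := gap j (2*(C₀*μ)) (by linarith [mul_nonneg hC₀ hμ.le]) hminjw
  have gapi := gap i (2*(C₀*dxz + C₀*μ))
    (by linarith [mul_nonneg hC₀ hμ.le, mul_nonneg hC₀ hd.le]) hminiw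
  have hijw : ‖f i w - f j w‖ * s ≤ 4*Q*(2*(C₀*dxz + C₀*μ)) + 4*Q*(2*(C₀*μ)) := by
    have t1 : ‖f i w - f j w‖ ≤ ‖f i w - v‖ + ‖v - f j w‖ := by
      have := dist_triangle (f i w) v (f j w)
      simpa [dist_eq_norm] using this
    have t2 : ‖v - f j w‖ = ‖f j w - v‖ := norm_sub_rev _ _
    have t3 : ‖f i w - f j w‖ * s ≤ (‖f i w - v‖ + ‖f j w - v‖) * s := by
      apply mul_le_mul_of_nonneg_right _ hs.le
      linarith
    linarith [gapi, gapj, t3]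
  have hizjz : ‖f i z - f j z‖ * s ≤
      4*Q*(2*(C₀*dxz + C₀*μ)) + 4*Q*(2*(C₀*μ)) + 2*(C₀*μ)*s := by
    have t1 : ‖f i z - f j z‖ ≤ ‖f i z - f i w‖ + ‖f i w - f j w‖ + ‖f j w - f j z‖ := by
      have u1 := dist_triangle (f i z) (f i w) (f j z)
      have u2 := dist_triangle (f i w) (f j w) (f j z)
      simp only [dist_eq_norm] at u1 u2
      linarith
    have t2 : ‖f j w - f j z‖ = ‖f j z - f j w‖ := norm_sub_rev _ _
    have t3 : ‖f i z - f j z‖ ≤ ‖f i w - f j w‖ + 2*(C₀*μ) := by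
      linarith [hLzw i, hLzw j]
    have t4 : ‖f i z - f j z‖ * s ≤ (‖f i w - f j w‖ + 2*(C₀*μ)) * s :=
      mul_le_mul_of_nonneg_right t3 hs.le
    linarith [hijw, t4]
  have hgoal' : ‖P y x - P y z‖ * s ≤ 3*C₀*dxz*s + 24*C₀*Q*dxz := by
    have t1 : ‖P y x - P y z‖ ≤ ‖f i x - f i z‖ + ‖f i z - f j z‖ := by
      rw [hPx, hPz]
      have := dist_triangle (f i x) (f i z) (f j z)
      simpa [dist_eq_norm] using this
    have t2 : ‖P y x - P y z‖ * s ≤ (C₀*dxz + ‖f i z - f j z‖) * s := by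
      apply mul_le_mul_of_nonneg_right _ hs.le
      linarith [hLxz i]
    have h1 : (0:ℝ) ≤ Q*C₀*(dxz - μ) :=
      mul_nonneg (mul_nonneg hQ0 hC₀) (by linarith)
    have h2 : (0:ℝ) ≤ C₀*(dxz - μ)*s :=
      mul_nonneg (mul_nonneg hC₀ (by linarith)) hs.le
    linarith [hizjz, t2, h1, h2]
  have hX : ‖P y x - P y z‖ ≤ (3*C₀*dxz*s + 24*C₀*Q*dxz)/s := by
    rw [le_div_iff₀ hs]
    exact hgoal'
  calc ‖P y x - P y z‖ ≤ (3*C₀*dxz*s + 24*C₀*Q*dxz)/s := hX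
    _ = (3*C₀ + 24*C₀*Q/s) * dxz := by
        field_simp

end Aux4
section Aux5

variable {d m n : ℕ} (K : Set (Xs d)) (f : Fin n → Xs d → Ys m) (P : Ys m → Xs d → Ys m)

lemma H1_nonneg (R s : ℝ) : 0 ≤ H1 K f P R s := by
  apply Real.sSup_nonneg
  rintro r ⟨y, x, z, -, -, -, rfl⟩
  positivity

lemma H2_nonneg (R s : ℝ) : 0 ≤ H2 K f P R s := by
  apply Real.sSup_nonneg
  rintro r ⟨y, x, -, rfl⟩
  positivity

lemma H2_bound (hK : IsBounded K) (hP : IsPrioritySelector f P) (R : ℝ) {s : ℝ}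
    (hs : 0 < s) : ∃ M₂ : ℝ, 0 ≤ M₂ ∧ ∀ r ∈ H2set K f P R s, r ≤ M₂ := by
  obtain ⟨C₀, M₀, hC₀, hM₀, hA⟩ := uniformA K f hK hs
  refine ⟨M₀, hM₀, ?_⟩
  rintro r ⟨y, x, hx, rfl⟩
  obtain ⟨i, hPx, -, -⟩ := hP y x
  rw [hPx]
  have hρx := rhoB_of_tube K f hs hx
  have hDx : ∀ u ∈ DSet K f, s ≤ dist x u := fun u hu =>
    le_trans hρx (rhoB_le_dist_D K f y x hu)
  exact (hA i x x hx.1 hx.1 hDx hDx).1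

lemma H1_bound (hK : IsBounded K) (hP : IsPrioritySelector f P) (R : ℝ) {s : ℝ}
    (hs : 0 < s) : ∃ C₁ : ℝ, 0 ≤ C₁ ∧ ∀ r ∈ H1set K f P R s, r ≤ C₁ := by
  obtain ⟨C₁, hC₁0, hsel⟩ := selector_diff K f P hK hP (R := R) hs
  refine ⟨C₁, hC₁0, ?_⟩
  rintro r ⟨y, x, z, hx, hz, hxz, rfl⟩
  have hd : (0:ℝ) < ‖x - z‖ := by
    rw [norm_pos_iff, sub_ne_zero]
    exact hxz
  rw [div_le_iff₀ hd]
  exact hsel y x z hx hz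

lemma H2_bddAbove (hK : IsBounded K) (hP : IsPrioritySelector f P) (R : ℝ) {s : ℝ}
    (hs : 0 < s) : BddAbove (H2set K f P R s) := by
  obtain ⟨M₂, -, h⟩ := H2_bound K f P hK hP R hs
  exact ⟨M₂, fun r hr => h r hr⟩

lemma H1_bddAbove (hK : IsBounded K) (hP : IsPrioritySelector f P) (R : ℝ) {s : ℝ}
    (hs : 0 < s) : BddAbove (H1set K f P R s) := by
  obtain ⟨C₁, -, h⟩ := H1_bound K f P hK hP R hs
  exact ⟨C₁, fun r hr => h r hr⟩

lemma STube_mono (R : ℝ) {a b : ℝ} (hab : a ≤ b) : STube K f R b ⊆ STube K f R a :=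
  fun q hq => ⟨hq.1, hq.2.1, le_trans hab hq.2.2⟩

lemma H1_antitone (hK : IsBounded K) (hP : IsPrioritySelector f P) (R : ℝ) {a b : ℝ}
    (ha : 0 < a) (hab : a ≤ b) : H1 K f P R b ≤ H1 K f P R a := by
  rcases (H1set K f P R b).eq_empty_or_nonempty with he | hne
  · rw [H1, he, Real.sSup_empty]
    exact H1_nonneg K f P R a
  · apply csSup_le_csSup (H1_bddAbove K f P hK hP R ha) hne
    rintro r ⟨y, x, z, hx, hz, hxz, rfl⟩
    exact ⟨y, x, z, STube_mono K f R hab hx, STube_mono K f R hab hz, hxz, rfl⟩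

lemma H2_antitone (hK : IsBounded K) (hP : IsPrioritySelector f P) (R : ℝ) {a b : ℝ}
    (ha : 0 < a) (hab : a ≤ b) : H2 K f P R b ≤ H2 K f P R a := by
  rcases (H2set K f P R b).eq_empty_or_nonempty with he | hne
  · rw [H2, he, Real.sSup_empty]
    exact H2_nonneg K f P R a
  · apply csSup_le_csSup (H2_bddAbove K f P hK hP R ha) hne
    rintro r ⟨y, x, hx, rfl⟩
    exact ⟨y, x, STube_mono K f R hab hx, rfl⟩

lemma lamB_nonneg (R s : ℝ) : 0 ≤ lamB K f P R s := by
  have h1 := H1_nonneg K f P R s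
  have h2 := H2_nonneg K f P R s
  exact div_nonneg zero_le_one (by linarith)

lemma lamB_mono (hK : IsBounded K) (hP : IsPrioritySelector f P) (R : ℝ) {a b : ℝ}
    (ha : 0 < a) (hab : a ≤ b) : lamB K f P R a ≤ lamB K f P R b := by
  have h1 := H1_nonneg K f P R b
  have h2 := H2_nonneg K f P R b
  have h3 := H1_antitone K f P hK hP R ha hab
  have h4 := H2_antitone K f P hK hP R ha hab
  exact one_div_le_one_div_of_le (by linarith) (by linarith)

lemma lamB_mul_H1_le (R s : ℝ) : lamB K f P R s * H1 K f P R s ≤ 1 := by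
  have h1 := H1_nonneg K f P R s
  have h2 := H2_nonneg K f P R s
  rw [lamB, div_mul_eq_mul_div, one_mul, div_le_one (by linarith)]
  linarith

lemma lamB_mul_H2_le (R s : ℝ) : lamB K f P R s * H2 K f P R s ≤ 1 := by
  have h1 := H1_nonneg K f P R s
  have h2 := H2_nonneg K f P R s
  rw [lamB, div_mul_eq_mul_div, one_mul, div_le_one (by linarith)]
  linarith

lemma lamB_intervalIntegrable (hK : IsBounded K) (hP : IsPrioritySelector f P) (R : ℝ)
    {a b : ℝ} (ha : 0 ≤ a) (hab : a ≤ b) :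
    IntervalIntegrable (lamB K f P R) volume a b := by
  classical
  set g : ℝ → ℝ :=
    fun t => if 0 < t then lamB K f P R t else sInf (lamB K f P R '' Set.Ioi 0) with hg
  have hbdd : BddBelow (lamB K f P R '' Set.Ioi 0) := by
    refine ⟨0, ?_⟩
    rintro r ⟨t, -, rfl⟩
    exact lamB_nonneg K f P R t
  have hgmono : Monotone g := by
    intro t1 t2 h12
    by_cases h1 : 0 < t1
    · have h2 : 0 < t2 := lt_of_lt_of_le h1 h12
      simp only [hg, if_pos h1, if_pos h2]
      exact lamB_mono K f P hK hP R h1 h12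
    · by_cases h2 : 0 < t2
      · simp only [hg, if_neg h1, if_pos h2]
        exact csInf_le hbdd ⟨t2, h2, rfl⟩
      · simp only [hg, if_neg h1, if_neg h2]
        exact le_rfl
  have hgi : IntervalIntegrable g volume a b := hgmono.intervalIntegrable
  rw [intervalIntegrable_iff] at hgi ⊢
  refine IntegrableOn.congr_fun hgi ?_ measurableSet_uIoc
  intro t ht
  rw [Set.uIoc_of_le hab] at ht
  have h0 : 0 < t := lt_of_le_of_lt ha ht.1
  simp only [hg, if_pos h0]

lemma theta_nonneg (R : ℝ) {r : ℝ} (hr : 0 ≤ r) : 0 ≤ ThetaB K f P R r :=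
  intervalIntegral.integral_nonneg hr (fun u _ => lamB_nonneg K f P R u)

lemma integral_lam_le (hK : IsBounded K) (hP : IsPrioritySelector f P) (R : ℝ)
    {a b : ℝ} (ha : 0 ≤ a) (hab : a ≤ b) (hb : 0 < b) :
    ∫ t in a..b, lamB K f P R t ≤ (b - a) * lamB K f P R b := by
  rw [intervalIntegral.integral_of_le hab]
  have hint : IntegrableOn (lamB K f P R) (Set.Ioc a b) volume := by
    have h := lamB_intervalIntegrable K f P hK hP R ha hab
    rwa [intervalIntegrable_iff, Set.uIoc_of_le hab] at h
  have hconst : IntegrableOn (fun _ : ℝ => lamB K f P R b) (Set.Ioc a b) volume := by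
    exact integrableOn_const (by rw [Real.volume_Ioc]; exact ENNReal.ofReal_ne_top)
  calc ∫ t in Set.Ioc a b, lamB K f P R t ∂volume
      ≤ ∫ _ in Set.Ioc a b, lamB K f P R b ∂volume := by
        apply setIntegral_mono_on hint hconst measurableSet_Ioc
        intro t ht
        exact lamB_mono K f P hK hP R (lt_of_le_of_lt ha ht.1) ht.2
    _ = (b - a) * lamB K f P R b := by
        rw [setIntegral_const, measureReal_def, Real.volume_Ioc, ENNReal.toReal_ofReal (by linarith),
          smul_eq_mul]

lemma eta_diff_le {A B : ℝ} (hA : 0 ≤ A) (hB : 0 ≤ B) :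
    |A/(1+A) - B/(1+B)| ≤ |A - B| := by
  have h1 : (0:ℝ) < 1 + A := by linarith
  have h2 : (0:ℝ) < 1 + B := by linarith
  rw [div_sub_div _ _ h1.ne' h2.ne', show A*(1+B) - (1+A)*B = A - B by ring, abs_div]
  have h3 : (1:ℝ) ≤ |(1+A)*(1+B)| := by
    rw [abs_of_pos (by positivity)]
    nlinarith
  exact div_le_self (abs_nonneg _) h3

end Aux5
set_option maxHeartbeats 2000000 in
/-- For every fixed `y`, the map `x ↦ η(y, x) P_y(x)` is globally
Lipschitz on `closure K`. -/
theorem statement17 {d m n : ℕ}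
    (K : Set (Xs d)) (hK : IsBounded K)
    (f : Fin n → Xs d → Ys m) (hf : ∀ i, LocLipOn K (f i))
    (hext : IsLimitExtension K f)
    (P : Ys m → Xs d → Ys m) (hP : IsPrioritySelector f P) :
    ∀ y : Ys m, ∃ C : NNReal,
      LipschitzOnWith C (fun x => etaB K f P y x • P y x) (closure K) := by
  classical
  intro y
  refine ⟨2, ?_⟩
  rw [lipschitzOnWith_iff_dist_le_mul]
  have key : ∀ x ∈ closure K, ∀ z ∈ closure K, omegaB K f y z ≤ omegaB K f y x →
      dist (etaB K f P y x • P y x) (etaB K f P y z • P y z) ≤ 2 * dist x z := by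
    intro x hx z hz hω
    set R : ℝ := 1 + ‖y‖ with hR
    set ωx := omegaB K f y x with hωx
    set ωz := omegaB K f y z with hωz
    have hωx0 : 0 ≤ ωx := omegaB_nonneg K f y x
    have hωz0 : 0 ≤ ωz := omegaB_nonneg K f y z
    have hωx1 : ωx < 1 := omegaB_lt_one K f y x
    have hωz1 : ωz < 1 := omegaB_lt_one K f y z
    set θx := ThetaB K f P R ωx with hθxdef
    set θz := ThetaB K f P R ωz with hθzdef
    have hetax : etaB K f P y x = θx / (1 + θx) := by
      rw [hθxdef, hωx, hR]
      rfl
    have hetaz : etaB K f P y z = θz / (1 + θz) := by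
      rw [hθzdef, hωz, hR]
      rfl
    have hI0z : IntervalIntegrable (lamB K f P R) volume 0 ωz :=
      lamB_intervalIntegrable K f P hK hP R le_rfl hωz0
    have hIzx : IntervalIntegrable (lamB K f P R) volume ωz ωx :=
      lamB_intervalIntegrable K f P hK hP R hωz0 hω
    have hθz0 : 0 ≤ θz := theta_nonneg K f P R hωz0
    have hθx0 : 0 ≤ θx := theta_nonneg K f P R hωx0
    have hθsub : θx - θz = ∫ t in ωz..ωx, lamB K f P R t := by
      rw [hθxdef, hθzdef]
      rw [ThetaB, ThetaB, ← intervalIntegral.integral_add_adjacent_intervals hI0z hIzx]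
      ring
    have hθzx : θz ≤ θx := by
      have h : (0:ℝ) ≤ ∫ t in ωz..ωx, lamB K f P R t :=
        intervalIntegral.integral_nonneg hω (fun u _ => lamB_nonneg K f P R u)
      linarith [hθsub]
    set ηx := etaB K f P y x with hηxdef
    set ηz := etaB K f P y z with hηzdef
    have hηz0 : 0 ≤ ηz := by
      rw [hetaz]
      exact div_nonneg hθz0 (by linarith)
    rcases eq_or_lt_of_le hωx0 with hx0 | hωxpos
    · -- both omegas are zero, eta vanishes
      have hzx0 : ωz = 0 := le_antisymm (hx0 ▸ hω) hωz0
      have hθxz : θx = 0 := by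
        rw [hθxdef, ← hx0]
        exact intervalIntegral.integral_same
      have hθzz : θz = 0 := by
        rw [hθzdef, hzx0]
        exact intervalIntegral.integral_same
      have hex : ηx = 0 := by
        rw [hetax, hθxz]
        norm_num
      have hez : ηz = 0 := by
        rw [hetaz, hθzz]
        norm_num
      rw [hex, hez, zero_smul, zero_smul, dist_self]
      positivity
    · rw [dist_eq_norm]
      have hdecomp : ηx • P y x - ηz • P y z = (ηx - ηz) • P y x + ηz • (P y x - P y z) := by
        rw [sub_smul, smul_sub]
        abel
      rw [hdecomp]
      have hb := norm_add_le ((ηx - ηz) • P y x) (ηz • (P y x - P y z))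
      rw [norm_smul, norm_smul, Real.norm_eq_abs, Real.norm_eq_abs, abs_of_nonneg hηz0] at hb
      have hpiece1 : |ηx - ηz| * ‖P y x‖ ≤ dist x z := by
        have h1 : |ηx - ηz| ≤ θx - θz := by
          rw [hetax, hetaz]
          have h := eta_diff_le hθx0 hθz0
          rwa [abs_of_nonneg (by linarith : (0:ℝ) ≤ θx - θz)] at h
        have h2 : θx - θz ≤ (ωx - ωz) * lamB K f P R ωx := by
          rw [hθsub]
          exact integral_lam_le K f P hK hP R hωz0 hω hωxpos
        have h3 : ‖P y x‖ ≤ H2 K f P R ωx := by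
          apply le_csSup (H2_bddAbove K f P hK hP R hωxpos)
          exact ⟨y, x, ⟨hx, by rw [hR]; linarith, le_rfl⟩, rfl⟩
        have h4 := lamB_mul_H2_le K f P R ωx
        have hlam0 := lamB_nonneg K f P R ωx
        have hsub0 : (0:ℝ) ≤ ωx - ωz := by linarith
        have hH20 := H2_nonneg K f P R ωx
        calc |ηx - ηz| * ‖P y x‖ ≤ (θx - θz) * ‖P y x‖ :=
              mul_le_mul_of_nonneg_right h1 (norm_nonneg _)
          _ ≤ ((ωx - ωz) * lamB K f P R ωx) * ‖P y x‖ :=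
              mul_le_mul_of_nonneg_right h2 (norm_nonneg _)
          _ ≤ ((ωx - ωz) * lamB K f P R ωx) * H2 K f P R ωx :=
              mul_le_mul_of_nonneg_left h3 (mul_nonneg hsub0 hlam0)
          _ = (ωx - ωz) * (lamB K f P R ωx * H2 K f P R ωx) := by ring
          _ ≤ (ωx - ωz) * 1 := mul_le_mul_of_nonneg_left h4 hsub0
          _ ≤ dist x z := by
              rw [mul_one, hωx, hωz]
              exact omegaB_sub_le K f y x z
      have hpiece2 : ηz * ‖P y x - P y z‖ ≤ dist x z := by
        rcases eq_or_lt_of_le hωz0 with hz0 | hωzpos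
        · have hθzz : θz = 0 := by
            rw [hθzdef, ← hz0]
            exact intervalIntegral.integral_same
          have hez : ηz = 0 := by
            rw [hetaz, hθzz]
            norm_num
          rw [hez, zero_mul]
          exact dist_nonneg
        · have hη1 : ηz ≤ θz := by
            rw [hetaz]
            apply div_le_self hθz0
            linarith
          have hθ2 : θz ≤ ωz * lamB K f P R ωz := by
            have h := integral_lam_le K f P hK hP R le_rfl hωz0 hωzpos
            rw [hθzdef, ThetaB]
            simpa using h
          have hPd : ‖P y x - P y z‖ ≤ H1 K f P R ωz * ‖x - z‖ := by
            by_cases hxz : x = z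
            · subst hxz
              simp only [sub_self, norm_zero, mul_zero]
              exact le_rfl
            · have hd : (0:ℝ) < ‖x - z‖ := by
                rw [norm_pos_iff, sub_ne_zero]
                exact hxz
              have hmem : ‖P y x - P y z‖ / ‖x - z‖ ∈ H1set K f P R ωz := by
                refine ⟨y, x, z, ⟨hx, by rw [hR]; linarith, hω⟩,
                  ⟨hz, by rw [hR]; linarith, le_rfl⟩, hxz, rfl⟩
              have h := le_csSup (H1_bddAbove K f P hK hP R hωzpos) hmem
              rw [div_le_iff₀ hd] at h
              exact h
          have h4 := lamB_mul_H1_le K f P R ωz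
          have hlam0 := lamB_nonneg K f P R ωz
          have hH10 := H1_nonneg K f P R ωz
          calc ηz * ‖P y x - P y z‖ ≤ θz * ‖P y x - P y z‖ :=
                mul_le_mul_of_nonneg_right hη1 (norm_nonneg _)
            _ ≤ (ωz * lamB K f P R ωz) * ‖P y x - P y z‖ :=
                mul_le_mul_of_nonneg_right hθ2 (norm_nonneg _)
            _ ≤ (ωz * lamB K f P R ωz) * (H1 K f P R ωz * ‖x - z‖) :=
                mul_le_mul_of_nonneg_left hPd (mul_nonneg hωz0 hlam0)
            _ = (ωz * (lamB K f P R ωz * H1 K f P R ωz)) * ‖x - z‖ := by ring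
            _ ≤ (1 * 1) * ‖x - z‖ := by
                apply mul_le_mul_of_nonneg_right _ (norm_nonneg _)
                exact mul_le_mul hωz1.le h4 (mul_nonneg hlam0 hH10) zero_le_one
            _ = dist x z := by
                rw [one_mul, one_mul, dist_eq_norm]
      calc ‖(ηx - ηz) • P y x + ηz • (P y x - P y z)‖
          ≤ |ηx - ηz| * ‖P y x‖ + ηz * ‖P y x - P y z‖ := hb
        _ ≤ dist x z + dist x z := add_le_add hpiece1 hpiece2
        _ = 2 * dist x z := by ring
  intro x hx z hz
  have h2 : ((2:NNReal):ℝ) = 2 := by norm_num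
  rw [h2]
  show dist (etaB K f P y x • P y x) (etaB K f P y z • P y z) ≤ 2 * dist x z
  rcases le_total (omegaB K f y z) (omegaB K f y x) with h | h
  · exact key x hx z hz h
  · have hk := key z hz x hx h
    rw [dist_comm] at hk
    rwa [dist_comm z x] at hk
end Bif
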